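/- Let a, b, c be real numbers with c ≠ 0. For every twice continuously differentiable function f : ℝ → Mat₃(ℝ) and every x ∈ ℝ, setting g(y) = f(y)·T(y) with T(y) = [[1, ay, 0],[0,1,0],[0, cy, 1]] and writing g₁, g₂, g₃ for the columns of g, one has f''(x)·G₂(x) + f'(x)·G₁(x) + f(x)·G₀ = R(x)·T(x)⁻¹, where T(x)⁻¹ = [[1, -ax, 0],[0,1,0],[0, -cx, 1]] and R(x) is the 3×3 matrix whose first column is (2(c²+2)/c²)·g₁(x), whose second column is g₂''(x) - 2x·g₂'(x) + (2(c²+2)/c²)·g₂(x) + (2/c)·(g₃'(x) - 2x·g₃(x)), and whose third column is -(2/c)·g₂'(x) + 2·g₃(x). That is, D₂ = T·B₂·T⁻¹ with B₂ the stated operator matrix. -/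

import Mathlib

open Matrix

/-- The polynomial matrix T(x). -/
noncomputable def T (a c : ℝ) (x : ℝ) : Matrix (Fin 3) (Fin 3) ℝ :=
  !![1, a * x, 0; 0, 1, 0; 0, c * x, 1]

/-- The inverse T(x)⁻¹. -/
noncomputable def Tinv (a c : ℝ) (x : ℝ) : Matrix (Fin 3) (Fin 3) ℝ :=
  !![1, -a * x, 0; 0, 1, 0; 0, -c * x, 1]

/-- Second-order coefficient of the operator D₂. -/
noncomputable def G2 (a c : ℝ) (x : ℝ) : Matrix (Fin 3) (Fin 3) ℝ :=
  !![0, a * x, 0; 0, 1, 0; 0, c * x, 0]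

/-- First-order coefficient of the operator D₂. -/
noncomputable def G1 (a c : ℝ) (x : ℝ) : Matrix (Fin 3) (Fin 3) ℝ :=
  !![0, 2 * a, -2 * a * x / c;
     0, 0, -2 / c;
     0, 2 * c + 2 / c, -2 * x]

/-- Zeroth-order coefficient of the operator D₂. -/
noncomputable def G0 (a c : ℝ) : Matrix (Fin 3) (Fin 3) ℝ :=
  !![2 + 4 / c ^ 2, 0, -2 * a / c;
     0, 2 + 4 / c ^ 2, 0;
     0, 0, 0]

/-- Entrywise derivative of a matrix-valued function. -/
noncomputable def mderiv (f : ℝ → Matrix (Fin 3) (Fin 3) ℝ) (x : ℝ) :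
    Matrix (Fin 3) (Fin 3) ℝ :=
  Matrix.of fun i j => deriv (fun y => f y i j) x

lemma diffDeriv (F : ℝ → ℝ) (h : ContDiff ℝ 2 F) : Differentiable ℝ (deriv F) := by
  have := (contDiff_succ_iff_deriv.mp (show ContDiff ℝ (1+1) F by norm_num [h])).2
  exact this.2.differentiable one_ne_zero

lemma key (a c : ℝ) (F0 F1 F2 : ℝ → ℝ) (h0 : Differentiable ℝ F0)
    (h1 : Differentiable ℝ F1) (h2 : Differentiable ℝ F2) :
    deriv (fun y => a * y * F0 y + (F1 y + c * y * F2 y))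
      = fun t => a * F0 t + a * t * deriv F0 t
          + (deriv F1 t + (c * F2 t + c * t * deriv F2 t)) := by
  funext t
  have H : HasDerivAt (fun y => a * y * F0 y + (F1 y + c * y * F2 y))
      ((a * 1) * F0 t + (a * t) * deriv F0 t
        + (deriv F1 t + ((c * 1) * F2 t + (c * t) * deriv F2 t))) t :=
    (((hasDerivAt_id t).const_mul a).mul (h0 t).hasDerivAt).add
      ((h1 t).hasDerivAt.add (((hasDerivAt_id t).const_mul c).mul (h2 t).hasDerivAt))
  rw [H.deriv]; ring

lemma key2 (a c : ℝ) (F0 D0 D1 F2 D2 : ℝ → ℝ) (h0 : Differentiable ℝ F0)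
    (hd0 : Differentiable ℝ D0) (hd1 : Differentiable ℝ D1)
    (h2 : Differentiable ℝ F2) (hd2 : Differentiable ℝ D2) (x : ℝ) :
    deriv (fun t => a * F0 t + a * t * D0 t + (D1 t + (c * F2 t + c * t * D2 t))) x
      = a * deriv F0 x + (a * D0 x + a * x * deriv D0 x)
        + (deriv D1 x + (c * deriv F2 x + (c * D2 x + c * x * deriv D2 x))) := by
  have H : HasDerivAt
      (fun t => a * F0 t + a * t * D0 t + (D1 t + (c * F2 t + c * t * D2 t)))
      (a * deriv F0 x + ((a * 1) * D0 x + (a * x) * deriv D0 x)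
        + (deriv D1 x + (c * deriv F2 x + ((c * 1) * D2 x + (c * x) * deriv D2 x)))) x :=
    (((h0 x).hasDerivAt.const_mul a).add
        (((hasDerivAt_id x).const_mul a).mul (hd0 x).hasDerivAt)).add
      ((hd1 x).hasDerivAt.add (((h2 x).hasDerivAt.const_mul c).add
        (((hasDerivAt_id x).const_mul c).mul (hd2 x).hasDerivAt)))
  rw [H.deriv]; ring

/-- the conjugation formula D₂ = T·B₂·T⁻¹: for every C² matrix-valued
function f, with g(y) = f(y)·T(y) and columns g₁, g₂, g₃ of g,
f''(x)·G₂(x) + f'(x)·G₁(x) + f(x)·G₀ = R(x)·T(x)⁻¹, where the columns of R(x) are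
(2(c²+2)/c²)·g₁(x),  g₂''(x) - 2x·g₂'(x) + (2(c²+2)/c²)·g₂(x) + (2/c)(g₃'(x) - 2x·g₃(x)),
and -(2/c)·g₂'(x) + 2·g₃(x). -/
theorem D2_conjugated (a b c : ℝ) (hc : c ≠ 0) (f : ℝ → Matrix (Fin 3) (Fin 3) ℝ)
    (hf : ∀ i j, ContDiff ℝ 2 (fun x => f x i j))
    (g : ℝ → Matrix (Fin 3) (Fin 3) ℝ) (hg : ∀ y, g y = f y * T a c y) (x : ℝ) :
    mderiv (mderiv f) x * G2 a c x + mderiv f x * G1 a c x + f x * G0 a c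
      = (Matrix.of fun i =>
          ![2 * (c ^ 2 + 2) / c ^ 2 * g x i 0,
            deriv (deriv (fun y => g y i 1)) x - 2 * x * deriv (fun y => g y i 1) x
              + 2 * (c ^ 2 + 2) / c ^ 2 * g x i 1
              + 2 / c * (deriv (fun y => g y i 2) x - 2 * x * g x i 2),
            -(2 / c) * deriv (fun y => g y i 1) x + 2 * g x i 2]) * Tinv a c x := by
  ext i j
  have h0 : Differentiable ℝ (fun y => f y i 0) := (hf i 0).differentiable two_ne_zero
  have h1 : Differentiable ℝ (fun y => f y i 1) := (hf i 1).differentiable two_ne_zero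
  have h2 : Differentiable ℝ (fun y => f y i 2) := (hf i 2).differentiable two_ne_zero
  have h0' := diffDeriv _ (hf i 0)
  have h1' := diffDeriv _ (hf i 1)
  have h2' := diffDeriv _ (hf i 2)
  have e0 : (fun y => g y i 0) = fun y => f y i 0 := by
    funext y; simp [hg, T, Matrix.mul_apply, Fin.sum_univ_three, Matrix.cons_val_zero, Matrix.cons_val_one, Matrix.head_cons, Matrix.cons_val_two, Matrix.tail_cons, Matrix.vecHead, Matrix.vecTail]
  have e2 : (fun y => g y i 2) = fun y => f y i 2 := by
    funext y; simp [hg, T, Matrix.mul_apply, Fin.sum_univ_three, Matrix.cons_val_zero, Matrix.cons_val_one, Matrix.head_cons, Matrix.cons_val_two, Matrix.tail_cons, Matrix.vecHead, Matrix.vecTail]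
  have e1 : (fun y => g y i 1)
      = fun y => a * y * f y i 0 + (f y i 1 + c * y * f y i 2) := by
    funext y; simp [hg, T, Matrix.mul_apply, Fin.sum_univ_three, Matrix.cons_val_zero, Matrix.cons_val_one, Matrix.head_cons, Matrix.cons_val_two, Matrix.tail_cons, Matrix.vecHead, Matrix.vecTail]; ring
  have d1 : deriv (fun y => g y i 1)
      = fun t => a * f t i 0 + a * t * deriv (fun y => f y i 0) t
          + (deriv (fun y => f y i 1) t
            + (c * f t i 2 + c * t * deriv (fun y => f y i 2) t)) := by
    rw [e1]; exact key a c _ _ _ h0 h1 h2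
  have d1x : deriv (fun y => g y i 1) x
      = a * f x i 0 + a * x * deriv (fun y => f y i 0) x
          + (deriv (fun y => f y i 1) x
            + (c * f x i 2 + c * x * deriv (fun y => f y i 2) x)) := by rw [d1]
  have dd1x : deriv (deriv (fun y => g y i 1)) x
      = a * deriv (fun y => f y i 0) x
          + (a * deriv (fun y => f y i 0) x + a * x * deriv (deriv (fun y => f y i 0)) x)
          + (deriv (deriv (fun y => f y i 1)) x
            + (c * deriv (fun y => f y i 2) x
              + (c * deriv (fun y => f y i 2) x + c * x * deriv (deriv (fun y => f y i 2)) x))) := by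
    rw [d1]; exact key2 a c _ _ _ _ _ h0 h0' h1' h2 h2' x
  have d2x : deriv (fun y => g y i 2) x = deriv (fun y => f y i 2) x := by rw [e2]
  have g0x : g x i 0 = f x i 0 := congrFun e0 x
  have g1x : g x i 1 = a * x * f x i 0 + (f x i 1 + c * x * f x i 2) := congrFun e1 x
  have g2x : g x i 2 = f x i 2 := congrFun e2 x
  fin_cases j <;>
    · simp only [Matrix.add_apply, Matrix.mul_apply, Fin.sum_univ_three, G2, G1, G0,
        Tinv, mderiv, Matrix.of_apply, Matrix.cons_val', Matrix.cons_val_zero,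
        Matrix.cons_val_one, Matrix.head_cons, Matrix.empty_val',
        Matrix.cons_val_fin_one, Matrix.head_fin_const, Matrix.cons_val_two,
        Matrix.tail_cons, Fin.isValue, Fin.reduceFinMk, Matrix.cons_val]
      rw [d1x, dd1x, d2x, g0x, g1x, g2x]
      field_simp
      ring
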